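/- Let P be a normal p-subgroup of a finite group G. Then P is contained in the hypercenter Z_∞(G) of G if and only if O^p(G) ≤ C_G(P). -/

import Mathlib

open Subgroup
open scoped Pointwise
open scoped commutatorElement

/-- The hypercenter of `G`: the union of the upper central series. -/
def hypercenter (G : Type*) [Group G] : Subgroup G :=
  ⨆ n : ℕ, _root_.upperCentralSeries G n

/-- `O^p(G)`: the smallest normal subgroup of `G` with `p`-group quotient
(equivalently, with index a power of `p`, for finite `G`). -/
def pResidual (p : ℕ) (G : Type*) [Group G] : Subgroup G :=
  ⨅ N ∈ {N : Subgroup G | N.Normal ∧ ∃ k : ℕ, N.index = p ^ k}, N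

private def citer3 {G : Type*} [Group G] : ℕ → Subgroup G → Subgroup G
  | 0, H => H
  | n+1, H => citer3 n ⁅H, (⊤ : Subgroup G)⁆

private lemma citer3_succ {G : Type*} [Group G] (n : ℕ) (H : Subgroup G) :
    citer3 (n+1) H = ⁅citer3 n H, (⊤ : Subgroup G)⁆ := by
  induction n generalizing H with
  | zero => rfl
  | succ n ih => show citer3 (n+1) ⁅H, ⊤⁆ = _; rw [ih]; rfl

private lemma citer3_bot_le_ucs {G : Type*} [Group G] :
    ∀ (n : ℕ) (H : Subgroup G), citer3 n H = ⊥ → H ≤ Subgroup.upperCentralSeries G n := by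
  intro n
  induction n with
  | zero => intro H h; simp [citer3] at h; simp [h]
  | succ n ih =>
    intro H h
    have h2 : ⁅H, (⊤ : Subgroup G)⁆ ≤ Subgroup.upperCentralSeries G n := ih _ h
    intro x hx
    rw [Subgroup.mem_upperCentralSeries_succ_iff]
    intro y
    exact h2 (commutator_mem_commutator hx (mem_top y))

private lemma citer3_le_self {G : Type*} [Group G] {H : Subgroup G}
    (hH : ⁅H, (⊤ : Subgroup G)⁆ ≤ H) : ∀ n, citer3 n H ≤ H := by
  intro n
  induction n with
  | zero => exact le_rfl
  | succ n ih => rw [citer3_succ]; exact (commutator_mono ih le_rfl).trans hH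

private lemma pResidual_normal3 (p : ℕ) (G : Type*) [Group G] : (pResidual p G).Normal := by
  constructor
  intro x hx g
  simp only [pResidual, Subgroup.mem_iInf] at hx ⊢
  intro N hN
  exact hN.1.conj_mem x (hx N hN) g

private lemma pResidual_index3 {p : ℕ} (hp : p.Prime) (G : Type*) [Group G] [Finite G] :
    ∃ k : ℕ, (pResidual p G).index = p ^ k := by
  set s : Set (Subgroup G) := {N : Subgroup G | N.Normal ∧ ∃ k : ℕ, N.index = p ^ k} with hs
  have hinf : ∀ N₁ ∈ s, ∀ N₂ ∈ s, N₁ ⊓ N₂ ∈ s := by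
    rintro N₁ ⟨h₁n, a, ha⟩ N₂ ⟨h₂n, b, hb⟩
    haveI := h₁n; haveI := h₂n
    refine ⟨inferInstance, ?_⟩
    have hle : N₁ ⊓ N₂ ≤ N₁ := inf_le_left
    have h1 : (N₁ ⊓ N₂).relIndex N₁ * N₁.index = (N₁ ⊓ N₂).index := relIndex_mul_index hle
    have h2 : (N₁ ⊓ N₂).relIndex N₁ = N₂.relIndex N₁ := inf_relIndex_left N₁ N₂
    have h3 : N₂.relIndex N₁ ∣ N₂.index := relIndex_dvd_index_of_normal N₂ N₁
    have hdvd : (N₁ ⊓ N₂).index ∣ p ^ (b + a) := by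
      rw [← h1, h2, pow_add, ← ha, ← hb]
      exact mul_dvd_mul h3 dvd_rfl
    obtain ⟨m, _, hm⟩ := (Nat.dvd_prime_pow hp).mp hdvd
    exact ⟨m, hm⟩
  have htop : (⊤ : Subgroup G) ∈ s := ⟨inferInstance, 0, by simp [Subgroup.index_top]⟩
  obtain ⟨N₀, hN₀, hmin'⟩ := (Set.toFinite s).exists_minimal ⟨⊤, htop⟩
  have hmin : ∀ N ∈ s, N ≤ N₀ → N₀ = N := fun N hN hle => le_antisymm (hmin' hN hle) hle
  have hleast : ∀ N ∈ s, N₀ ≤ N := by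
    intro N hN
    have h1 : N₀ ⊓ N ∈ s := hinf N₀ hN₀ N hN
    have h2 : N₀ = N₀ ⊓ N := hmin _ h1 inf_le_left
    rw [h2]; exact inf_le_right
  have : pResidual p G = N₀ := le_antisymm (iInf₂_le N₀ hN₀) (le_iInf₂ hleast)
  rw [this]; exact hN₀.2

private lemma coprime_centralizes3 {p : ℕ} {G : Type*} [Group G] [Finite G]
    {P : Subgroup G} (hPn : P.Normal) (hpP : IsPGroup p P)
    (hP : P ≤ ⨆ n : ℕ, Subgroup.upperCentralSeries G n)
    {h : G} (hcop : Nat.Coprime (orderOf h) p) :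
    ∀ x ∈ P, h * x = x * h := by
  have claim : ∀ i : ℕ, ∀ x ∈ P, x ∈ Subgroup.upperCentralSeries G i → h * x * h⁻¹ = x := by
    intro i
    induction i with
    | zero =>
      intro x _ hx
      have : x = 1 := by simpa [Subgroup.upperCentralSeries_zero] using hx
      simp [this]
    | succ i ih =>
      intro x hxP hx
      set z := x⁻¹ * (h * x * h⁻¹) with hz
      have hzP : z ∈ P := mul_mem (inv_mem hxP) (hPn.conj_mem x hxP h)
      have hzZ : z ∈ Subgroup.upperCentralSeries G i := by
        have hxinv : x⁻¹ ∈ Subgroup.upperCentralSeries G (i + 1) := inv_mem hx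
        have := (Subgroup.mem_upperCentralSeries_succ_iff).mp hxinv h
        simpa [hz, mul_assoc, commutatorElement_def] using this
      have hzfix : h * z * h⁻¹ = z := ih z hzP hzZ
      have hk : ∀ k : ℕ, h ^ k * x * (h ^ k)⁻¹ = x * z ^ k := by
        intro k
        induction k with
        | zero => simp
        | succ k ihk =>
          have hconjz : h * z ^ k * h⁻¹ = z ^ k := by
            have : (h * z * h⁻¹) ^ k = h * z ^ k * h⁻¹ := by
              rw [conj_pow]
            rw [← this, hzfix]
          calc h ^ (k+1) * x * (h ^ (k+1))⁻¹
              = h * (h ^ k * x * (h ^ k)⁻¹) * h⁻¹ := by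
                rw [pow_succ']; group
            _ = h * (x * z ^ k) * h⁻¹ := by rw [ihk]
            _ = (h * x * h⁻¹) * (h * z ^ k * h⁻¹) := by group
            _ = (h * x * h⁻¹) * z ^ k := by rw [hconjz]
            _ = (x * z) * z ^ k := by
                have : h * x * h⁻¹ = x * z := by rw [hz]; group
                rw [this]
            _ = x * z ^ (k + 1) := by rw [mul_assoc, ← pow_succ']
      have hzm : z ^ orderOf h = 1 := by
        have := hk (orderOf h)
        rw [pow_orderOf_eq_one] at this
        simpa using this.symm
      obtain ⟨j, hj⟩ := hpP ⟨z, hzP⟩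
      have hzp : z ^ p ^ j = 1 := by
        have := congrArg (Subtype.val) hj
        simpa using this
      have hz1 : z = 1 := by
        have h1 : orderOf z ∣ orderOf h := orderOf_dvd_of_pow_eq_one hzm
        have h2 : orderOf z ∣ p ^ j := orderOf_dvd_of_pow_eq_one hzp
        have h3 : Nat.Coprime (orderOf h) (p ^ j) := hcop.pow_right j
        have h4 : orderOf z ∣ 1 := h3 ▸ Nat.dvd_gcd h1 h2
        exact orderOf_eq_one_iff.mp (Nat.dvd_one.mp h4)
      have : h * x * h⁻¹ = x * z := by rw [hz]; group
      rw [this, hz1, mul_one]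
  intro x hxP
  have hx : x ∈ ⨆ n : ℕ, Subgroup.upperCentralSeries G n := hP hxP
  rw [Subgroup.mem_iSup_of_directed (Monotone.directed_le (Subgroup.upperCentralSeries_mono G))] at hx
  obtain ⟨i, hi⟩ := hx
  have hfix := claim i x hxP hi
  calc h * x = (h * x * h⁻¹) * h := by group
    _ = x * h := by rw [hfix]

theorem stmt3 {p : ℕ} (hp : p.Prime) {G : Type*} [Group G] [Finite G]
    (P : Subgroup G) (hPn : P.Normal) (hpP : IsPGroup p P) :
    P ≤ hypercenter G ↔ pResidual p G ≤ Subgroup.centralizer (P : Set G) := by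
  haveI := Fact.mk hp
  constructor
  · -- forward
    intro hZ
    rw [hypercenter] at hZ
    set C := Subgroup.centralizer (P : Set G) with hC
    have hcent : ∀ h : G, Nat.Coprime (orderOf h) p → h ∈ C := by
      intro h hcop
      rw [hC, mem_centralizer_iff]
      intro x hx
      exact (coprime_centralizes3 hPn hpP hZ hcop x hx).symm
    have hCn : C.Normal := by
      constructor
      intro c hc g
      rw [hC, mem_centralizer_iff] at hc ⊢
      intro x hx
      have hy : g⁻¹ * x * g ∈ P := by
        have := hPn.conj_mem x hx g⁻¹
        simpa using this
      have h2 := hc _ hy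
      calc x * (g * c * g⁻¹) = g * ((g⁻¹ * x * g) * c) * g⁻¹ := by group
        _ = g * (c * (g⁻¹ * x * g)) * g⁻¹ := by rw [h2]
        _ = (g * c * g⁻¹) * x := by group
    haveI := hCn
    have hpQ : IsPGroup p (G ⧸ C) := by
      intro q
      induction q using QuotientGroup.induction_on with
      | _ g =>
        refine ⟨(orderOf g).factorization p, ?_⟩
        set k := (orderOf g).factorization p with hkdef
        have hn0 : orderOf g ≠ 0 := (orderOf_pos g).ne'
        have hdvd : p ^ k ∣ orderOf g := Nat.ordProj_dvd (orderOf g) p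
        have hord : orderOf (g ^ p ^ k) = orderOf g / p ^ k := by
          rw [orderOf_pow, Nat.gcd_eq_right hdvd]
        have hcop : Nat.Coprime (orderOf (g ^ p ^ k)) p := by
          rw [hord]
          exact (Nat.coprime_ordCompl hp hn0).symm
        have hmem : g ^ p ^ k ∈ C := hcent _ hcop
        have : ((g : G ⧸ C)) ^ p ^ k = ((g ^ p ^ k : G) : G ⧸ C) := by
          rw [← QuotientGroup.mk_pow]
        rw [this, QuotientGroup.eq_one_iff]
        exact hmem
    obtain ⟨m, hm⟩ := IsPGroup.iff_card.mp hpQ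
    have hidx : C.index = p ^ m := hm
    exact iInf₂_le C ⟨hCn, m, hidx⟩
  · -- backward
    intro hKC
    obtain ⟨S, hPS⟩ := hpP.exists_le_sylow
    haveI : Group.IsNilpotent ↥(S : Subgroup G) := S.isPGroup'.isNilpotent
    obtain ⟨n, hn⟩ := Subgroup.nilpotent_iff_lowerCentralSeries.mp this
    set K := pResidual p G with hKdef
    haveI hKn : K.Normal := pResidual_normal3 p G
    -- S ⊔ K = ⊤
    obtain ⟨k, hk⟩ := pResidual_index3 hp G
    have hTop : (S : Subgroup G) ⊔ K = ⊤ := by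
      rw [← Subgroup.index_eq_one]
      have h1 : ((S : Subgroup G) ⊔ K).index ∣ p ^ k := hk ▸ index_dvd_of_le le_sup_right
      obtain ⟨j, _, hje⟩ := (Nat.dvd_prime_pow hp).mp h1
      have h2 : ((S : Subgroup G) ⊔ K).index ∣ (S : Subgroup G).index :=
        index_dvd_of_le le_sup_left
      have hnd : ¬ p ∣ (S : Subgroup G).index := S.not_dvd_index
      have hj0 : j = 0 := by
        by_contra hj0
        exact hnd (dvd_trans (dvd_pow_self p hj0) (hje ▸ h2))
      rw [hje, hj0, pow_zero]
    have hPcomm : ⁅P, (⊤ : Subgroup G)⁆ ≤ P := by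
      rw [commutator_le]
      intro g hg y _
      have h2 : y * g⁻¹ * y⁻¹ ∈ P := hPn.conj_mem g⁻¹ (inv_mem hg) y
      have h3 : ⁅g, y⁆ = g * (y * g⁻¹ * y⁻¹) := by group
      rw [h3]; exact mul_mem hg h2
    have hmapS : Subgroup.map (S : Subgroup G).subtype ⊤ = (S : Subgroup G) := by
      rw [← MonoidHom.range_eq_map, Subgroup.range_subtype]
    have key : ∀ m : ℕ, citer3 m P ≤
        Subgroup.map (S : Subgroup G).subtype ((⊤ : Subgroup ↥(S : Subgroup G)).lowerCentralSeries m) := by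
      intro m
      induction m with
      | zero =>
        show P ≤ _
        rw [Subgroup.lowerCentralSeries_zero, hmapS]
        exact hPS
      | succ m ih =>
        rw [citer3_succ]
        have h1 : ⁅citer3 m P, (⊤ : Subgroup G)⁆ ≤ ⁅citer3 m P, (S : Subgroup G)⁆ := by
          rw [commutator_le]
          intro x hx y _
          have hxP : x ∈ P := citer3_le_self hPcomm m hx
          have hy : y ∈ ((S : Subgroup G) : Set G) * (K : Set G) := by
            rw [← Subgroup.mul_normal]
            rw [hTop]
            trivial
          obtain ⟨s, hs, c, hc, rfl⟩ := hy
          have hcom : x * c = c * x := (mem_centralizer_iff.mp (hKC hc)) x hxP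
          have hcom2 : Commute x c := hcom
          have hkey : c * x⁻¹ = x⁻¹ * c := hcom2.symm.inv_right.eq
          have heq : ⁅x, s * c⁆ = ⁅x, s⁆ := by
            show x * (s * c) * x⁻¹ * (s * c)⁻¹ = x * s * x⁻¹ * s⁻¹
            calc x * (s * c) * x⁻¹ * (s * c)⁻¹
                = x * s * (c * x⁻¹ * c⁻¹) * s⁻¹ := by group
              _ = x * s * (x⁻¹ * (c * c⁻¹)) * s⁻¹ := by rw [hkey]; group
              _ = x * s * x⁻¹ * s⁻¹ := by group
          rw [heq]
          exact commutator_mem_commutator hx hs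
        refine h1.trans ?_
        calc ⁅citer3 m P, (S : Subgroup G)⁆
            ≤ ⁅Subgroup.map (S : Subgroup G).subtype ((⊤ : Subgroup ↥(S : Subgroup G)).lowerCentralSeries m),
                Subgroup.map (S : Subgroup G).subtype ⊤⁆ :=
              commutator_mono ih (by rw [hmapS])
          _ = Subgroup.map (S : Subgroup G).subtype
                ⁅(⊤ : Subgroup ↥(S : Subgroup G)).lowerCentralSeries m, ⊤⁆ :=
              (Subgroup.map_commutator _ _ _).symm
          _ = Subgroup.map (S : Subgroup G).subtype
                ((⊤ : Subgroup ↥(S : Subgroup G)).lowerCentralSeries (m + 1)) := by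
              rw [Subgroup.lowerCentralSeries_succ]
    have hbot : citer3 n P = ⊥ := by
      have := key n
      rw [hn] at this
      simpa using this
    have hle : P ≤ Subgroup.upperCentralSeries G n := citer3_bot_le_ucs n P hbot
    rw [hypercenter]
    exact hle.trans (le_iSup (_root_.upperCentralSeries G) n)
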